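/- (Stronger Central Sets Theorem, commutative case) Let (S,+) be a commutative semigroup and let C be a central subset of S. Then there exist functions α : 𝒫_f(ℕ→S) → S and H : 𝒫_f(ℕ→S) → 𝒫_f(ℕ) such that: (1) if F ⊊ G then max H(F) < min H(G); (2) whenever r ∈ ℕ, G₁ ⊊ G₂ ⊊ ⋯ ⊊ G_r are finite nonempty sets of sequences, and f_i ∈ G_i for each i, then Σ_{i=1}^r (α(G_i) + Σ_{t∈H(G_i)} f_i(t)) ∈ C. -/

import Mathlib

/-- `A` is thick: every finite nonempty set can be right-translated into `A`. -/
def Thick {S : Type*} [Semigroup S] (A : Set S) : Prop :=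
  ∀ E : Finset S, E.Nonempty → ∃ x : S, ∀ e ∈ E, e * x ∈ A

def Syndetic {S : Type*} [Semigroup S] (A : Set S) : Prop :=
  ∃ F : Finset S, F.Nonempty ∧ ∀ s : S, ∃ t ∈ F, t * s ∈ A

def PiecewiseSyndetic {S : Type*} [Semigroup S] (A : Set S) : Prop :=
  ∃ F : Finset S, F.Nonempty ∧ Thick {s : S | ∃ t ∈ F, t * s ∈ A}

def ThickAdd {S : Type*} [AddSemigroup S] (A : Set S) : Prop :=
  ∀ E : Finset S, E.Nonempty → ∃ x : S, ∀ e ∈ E, e + x ∈ A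

def SyndeticAdd {S : Type*} [AddSemigroup S] (A : Set S) : Prop :=
  ∃ F : Finset S, F.Nonempty ∧ ∀ s : S, ∃ t ∈ F, t + s ∈ A

def PiecewiseSyndeticAdd {S : Type*} [AddSemigroup S] (A : Set S) : Prop :=
  ∃ F : Finset S, F.Nonempty ∧ ThickAdd {s : S | ∃ t ∈ F, t + s ∈ A}

/-- Sum of `f t` over a nonempty finite `H ⊆ ℕ` in a commutative semigroup
(junk value `f 0` when `H = ∅`). -/
def fSum {S : Type*} [AddCommSemigroup S] (H : Finset ℕ) (f : ℕ → S) : S :=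
  match Finset.sort H (· ≤ ·) with
  | [] => f 0
  | a :: l => l.foldl (fun s t => s + f t) (f a)

/-- `J`-set in a commutative semigroup. -/
def JSetAdd {S : Type*} [AddCommSemigroup S] (A : Set S) : Prop :=
  ∀ F : Finset (ℕ → S), F.Nonempty →
    ∃ (a : S) (H : Finset ℕ), H.Nonempty ∧ ∀ f ∈ F, a + fSum H f ∈ A

/-- `x(m,a,t,f) = a(0)·f(t 0)·a(1)·f(t 1)⋯f(t (m-1))·a(m)` (0-indexed version of
`(∏_{j=1}^m a(j)·f(t(j)))·a(m+1)`). -/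
def xNC {S : Type*} [Semigroup S] (m : ℕ) (a : ℕ → S) (t : ℕ → ℕ) (f : ℕ → S) : S :=
  (List.range m).foldl (fun s j => s * f (t j) * a (j + 1)) (a 0)

/-- `J`-set in a not-necessarily-commutative semigroup. -/
def JSetNC {S : Type*} [Semigroup S] (A : Set S) : Prop :=
  ∀ G : Finset (ℕ → S), G.Nonempty →
    ∃ (m : ℕ) (a : ℕ → S) (t : ℕ → ℕ), 1 ≤ m ∧
      (∀ i j : ℕ, i < j → j < m → t i < t j) ∧
      ∀ f ∈ G, xNC m a t f ∈ A

/-- `v 0 + v 1 + ⋯ + v r` in an additive semigroup. -/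
def seqSum {S : Type*} [AddSemigroup S] (v : ℕ → S) (r : ℕ) : S :=
  (List.range r).foldl (fun s j => s + v (j + 1)) (v 0)

/-- `v 0 * v 1 * ⋯ * v r` in a semigroup. -/
def seqProd {S : Type*} [Semigroup S] (v : ℕ → S) (r : ℕ) : S :=
  (List.range r).foldl (fun s j => s * v (j + 1)) (v 0)

/-- Collectionwise piecewise syndetic family (multiplicative). -/
def CollectionwisePS {S : Type*} [Semigroup S] (𝒜 : Set (Set S)) : Prop :=
  ∃ (G : Finset (Set S) → Finset S) (x : Finset (Set S) → Finset S → S),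
    ∀ (F : Finset S) (ℱ ℋ : Finset (Set S)), ℱ.Nonempty → ↑ℋ ⊆ 𝒜 → ℱ ⊆ ℋ →
      ∀ y ∈ F, ∃ t ∈ G ℱ, t * (y * x ℋ F) ∈ ⋂₀ (ℱ : Set (Set S))

/-- Collectionwise piecewise syndetic family (additive). -/
def CollectionwisePSAdd {S : Type*} [AddSemigroup S] (𝒜 : Set (Set S)) : Prop :=
  ∃ (G : Finset (Set S) → Finset S) (x : Finset (Set S) → Finset S → S),
    ∀ (F : Finset S) (ℱ ℋ : Finset (Set S)), ℱ.Nonempty → ↑ℋ ⊆ 𝒜 → ℱ ⊆ ℋ →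
      ∀ y ∈ F, ∃ t ∈ G ℱ, t + (y + x ℋ F) ∈ ⋂₀ (ℱ : Set (Set S))

/-- Central set (multiplicative), via the combinatorial characterization. -/
def Central {S : Type*} [Semigroup S] (A : Set S) : Prop :=
  ∃ (I : Type) (C : I → Set S), Nonempty I ∧
    (∀ N, C N ⊆ A) ∧
    (∀ N M : I, ∃ P : I, C P ⊆ C N ∧ C P ⊆ C M) ∧
    (∀ N : I, ∀ y ∈ C N, ∃ M : I, C M ⊆ {s : S | y * s ∈ C N}) ∧
    CollectionwisePS {B : Set S | ∃ N : I, B = C N}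

/-- Central set (additive), via the combinatorial characterization. -/
def CentralAdd {S : Type*} [AddSemigroup S] (A : Set S) : Prop :=
  ∃ (I : Type) (C : I → Set S), Nonempty I ∧
    (∀ N, C N ⊆ A) ∧
    (∀ N M : I, ∃ P : I, C P ⊆ C N ∧ C P ⊆ C M) ∧
    (∀ N : I, ∀ y ∈ C N, ∃ M : I, C M ⊆ {s : S | y + s ∈ C N}) ∧
    CollectionwisePSAdd {B : Set S | ∃ N : I, B = C N}

namespace SCST

variable {S : Type*} [AddCommSemigroup S]

theorem listfold_coe (f : ℕ → S) (l : List ℕ) (x : S) :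
    (WithZero.coe (l.foldl (fun s t => s + f t) x)) =
      WithZero.coe x + (l.map fun t => WithZero.coe (f t)).sum := by
  induction l generalizing x with
  | nil => simp
  | cons a l ih =>
      simp only [List.foldl_cons, List.map_cons, List.sum_cons, ih (x + f a)]
      rw [WithZero.coe_add, add_assoc]

theorem fSum_coe (H : Finset ℕ) (hH : H.Nonempty) (f : ℕ → S) :
    (WithZero.coe (fSum H f)) = ∑ t ∈ H, WithZero.coe (f t) := by
  have hs : ∑ t ∈ H, WithZero.coe (f t)
      = ((Finset.sort H (· ≤ ·)).map fun t => WithZero.coe (f t)).sum := by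
    rw [Finset.sum, ← Finset.sort_eq (s := H) (r := (· ≤ ·)), Multiset.map_coe, Multiset.sum_coe]
  rw [hs, fSum.eq_def]
  rcases h : Finset.sort H (· ≤ ·) with _ | ⟨a, l⟩
  · exfalso
    have h2 := Finset.sort_eq (s := H) (r := (· ≤ ·))
    rw [h] at h2
    exact hH.ne_empty (Finset.val_eq_zero.mp h2.symm)
  · simp only [listfold_coe, List.map_cons, List.sum_cons]

theorem fSum_congr {H : Finset ℕ} (hH : H.Nonempty) {f g : ℕ → S}
    (h : ∀ t ∈ H, f t = g t) : fSum H f = fSum H g := by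
  apply Option.some_injective
  show WithZero.coe _ = WithZero.coe _
  rw [fSum_coe H hH, fSum_coe H hH]
  exact Finset.sum_congr rfl fun t ht => by rw [h t ht]

theorem fSum_union {H₁ H₂ : Finset ℕ} (hd : Disjoint H₁ H₂) (h₁ : H₁.Nonempty)
    (h₂ : H₂.Nonempty) (f : ℕ → S) :
    fSum (H₁ ∪ H₂) f = fSum H₁ f + fSum H₂ f := by
  apply Option.some_injective
  show WithZero.coe _ = WithZero.coe _
  rw [fSum_coe _ (h₁.mono Finset.subset_union_left), WithZero.coe_add,
    fSum_coe _ h₁, fSum_coe _ h₂, Finset.sum_union hd]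

theorem fSum_image_shift {H : Finset ℕ} (hH : H.Nonempty) (n : ℕ) (f : ℕ → S) :
    fSum (H.image (· + n)) f = fSum H (fun t => f (t + n)) := by
  classical
  apply Option.some_injective
  show WithZero.coe _ = WithZero.coe _
  rw [fSum_coe _ (hH.image _), fSum_coe _ hH, Finset.sum_image]
  intro x _ y _ h
  simp only at h
  omega

/-! ### Piecewise syndetic sets -/

theorem psAdd_mono {A B : Set S} (hAB : A ⊆ B) (hA : PiecewiseSyndeticAdd A) :
    PiecewiseSyndeticAdd B := by
  obtain ⟨G, hG, hT⟩ := hA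
  refine ⟨G, hG, fun E hE => ?_⟩
  obtain ⟨x, hx⟩ := hT E hE
  exact ⟨x, fun e he => by obtain ⟨t, ht, hta⟩ := hx e he; exact ⟨t, ht, hAB hta⟩⟩

theorem psAdd_nonempty {A : Set S} (hA : PiecewiseSyndeticAdd A) : A.Nonempty := by
  obtain ⟨G, ⟨t, ht⟩, hT⟩ := hA
  obtain ⟨x, hx⟩ := hT {t} ⟨t, Finset.mem_singleton_self t⟩
  obtain ⟨t', _, hta⟩ := hx t (Finset.mem_singleton_self t)
  exact ⟨_, hta⟩

theorem psAdd_union {A B : Set S} (hAB : PiecewiseSyndeticAdd (A ∪ B)) :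
    PiecewiseSyndeticAdd A ∨ PiecewiseSyndeticAdd B := by
  classical
  by_contra hcon
  push_neg at hcon
  obtain ⟨hA, hB⟩ := hcon
  obtain ⟨G, hG, hT⟩ := hAB
  -- B is not PS with translate set G, so thickness fails for some D
  apply hB
  refine ⟨G, hG, fun D hD => ?_⟩
  -- A is not PS with translate set G + D
  have hGD : ((G ×ˢ D).image fun q => q.1 + q.2).Nonempty :=
    (hG.product hD).image _
  have hfail : ¬ ThickAdd {s : S | ∃ t ∈ (G ×ˢ D).image fun q : S × S => q.1 + q.2, t + s ∈ A} := by
    intro hth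
    exact hA ⟨_, hGD, hth⟩
  rw [ThickAdd] at hfail
  push_neg at hfail
  obtain ⟨E, hE, hEfail⟩ := hfail
  -- thickness of T = ⋃_{t∈G}(-t+(A∪B)) applied to E + D
  obtain ⟨x₁, hx₁⟩ := hT ((E ×ˢ D).image fun q => q.1 + q.2) ((hE.product hD).image _)
  obtain ⟨e, he, hefail⟩ := hEfail x₁
  refine ⟨e + x₁, fun d hd => ?_⟩
  have : (e + d) + x₁ ∈ {s : S | ∃ t ∈ G, t + s ∈ A ∪ B} := by
    apply hx₁
    exact Finset.mem_image.mpr ⟨(e, d), Finset.mem_product.mpr ⟨he, hd⟩, rfl⟩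
  obtain ⟨t, ht, htab⟩ := this
  refine ⟨t, ht, ?_⟩
  rcases htab with hA' | hB'
  · exfalso
    apply hefail
    refine ⟨t + d, Finset.mem_image.mpr ⟨(t, d), Finset.mem_product.mpr ⟨ht, hd⟩, rfl⟩, ?_⟩
    show (t + d) + (e + x₁) ∈ A
    have heq : (t + d) + (e + x₁) = t + (e + d + x₁) := by
      simp only [add_assoc, add_comm, add_left_comm]
    rw [heq]; exact hA'
  · have : t + (d + (e + x₁)) = t + (e + d + x₁) := by
      simp only [add_assoc, add_comm, add_left_comm]
    rw [this]; exact hB'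

end SCST
namespace SCST2
open Combinatorics
variable {S : Type*} [AddCommSemigroup S]
open SCST

theorem psAdd_jsetAdd {A : Set S} (hA : PiecewiseSyndeticAdd A) : JSetAdd A := by
  classical
  obtain ⟨G, hG, hT⟩ := hA
  intro F hF
  obtain ⟨f₀, hf₀⟩ := hF
  let αt := {f : ℕ → S // f ∈ F}
  haveI : Nonempty αt := ⟨⟨f₀, hf₀⟩⟩
  let κt := {t : S // t ∈ G}
  obtain ⟨ι, hι, hHJ⟩ := Line.exists_mono_in_high_dimension αt κt
  haveI := hι
  obtain ⟨t0, ht0⟩ := hG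
  haveI : Nonempty κt := ⟨⟨t0, ht0⟩⟩
  obtain ⟨l₀, -⟩ := hHJ fun _ => Classical.arbitrary κt
  obtain ⟨i₀, -⟩ := l₀.proper
  haveI : Nonempty ι := ⟨i₀⟩
  set n := Fintype.card ι with hn_def
  let e : ι ≃ Fin n := Fintype.equivFin ι
  -- the "word value" function
  set base : (ι → αt) → ℕ → S :=
    (fun w t => if h : t < n then ((w (e.symm ⟨t, h⟩)) : ℕ → S) t else f₀ t) with hbase_def
  have hbase : ∀ (w : ι → αt) (i : ι), base w ((e i : Fin n) : ℕ) = (w i).1 ((e i : Fin n) : ℕ) := by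
    intro w i
    simp only [hbase_def]
    rw [dif_pos (Fin.is_lt (e i))]
    simp only [Fin.eta, Equiv.symm_apply_apply]
  have hrange : (Finset.range n).Nonempty := ⟨(e i₀ : Fin n), Finset.mem_range.mpr (Fin.is_lt _)⟩
  set val : (ι → αt) → S := (fun w => fSum (Finset.range n) (base w)) with hval_def
  obtain ⟨x₁, hx₁⟩ := hT (Finset.image val Finset.univ) ((Finset.univ_nonempty).image val)
  have hcol : ∀ w : ι → αt, ∃ t, t ∈ G ∧ t + (val w + x₁) ∈ A := by
    intro w
    have := hx₁ (val w) (Finset.mem_image_of_mem val (Finset.mem_univ w))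
    obtain ⟨t, ht, hta⟩ := this
    exact ⟨t, ht, hta⟩
  let Col : (ι → αt) → κt := fun w => ⟨(hcol w).choose, (hcol w).choose_spec.1⟩
  obtain ⟨l, t₀, ht₀⟩ := hHJ Col
  have hline : ∀ x : αt, (t₀ : S) + (val (l x) + x₁) ∈ A := by
    intro x
    have h1 := (hcol (l x)).choose_spec.2
    have h2 : (hcol (l x)).choose = (t₀ : S) := congrArg Subtype.val (ht₀ x)
    rwa [h2] at h1
  -- the variable coordinates
  set H₀ : Finset ℕ :=
    (Finset.univ.filter fun i : ι => l.idxFun i = none).image fun i => ((e i : Fin n) : ℕ)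
      with hH₀_def
  have hH₀mem : ∀ (t : ℕ) (h : t < n), (t ∈ H₀ ↔ l.idxFun (e.symm ⟨t, h⟩) = none) := by
    intro t h
    constructor
    · intro ht
      obtain ⟨i, hi, hit⟩ := Finset.mem_image.mp ht
      have hfin : (⟨t, h⟩ : Fin n) = e i := by
        apply Fin.ext
        exact hit.symm
      rw [hfin, Equiv.symm_apply_apply]
      exact (Finset.mem_filter.mp hi).2
    · intro hnone
      refine Finset.mem_image.mpr ⟨e.symm ⟨t, h⟩, Finset.mem_filter.mpr ⟨Finset.mem_univ _, hnone⟩, ?_⟩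
      simp
  obtain ⟨iv, hiv⟩ := l.proper
  have hH₀ne : H₀.Nonempty :=
    ⟨(e iv : Fin n), Finset.mem_image.mpr ⟨iv, Finset.mem_filter.mpr ⟨Finset.mem_univ _, hiv⟩, rfl⟩⟩
  have hH₀sub : H₀ ⊆ Finset.range n := by
    intro t ht
    obtain ⟨i, _, hit⟩ := Finset.mem_image.mp ht
    rw [← hit]
    exact Finset.mem_range.mpr (Fin.is_lt _)
  set R : Finset ℕ := Finset.range n \ H₀ with hR_def
  have hsplit : H₀ ∪ R = Finset.range n := Finset.union_sdiff_of_subset hH₀sub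
  have hdisj : Disjoint H₀ R := Finset.disjoint_sdiff
  -- on variable coordinates, base (l x) agrees with x
  have hvar : ∀ (x : αt) (t : ℕ), t ∈ H₀ → base (l x) t = x.1 t := by
    intro x t ht
    have h : t < n := Finset.mem_range.mp (hH₀sub ht)
    have hnone := (hH₀mem t h).mp ht
    have hb : base (l x) t = ((l x) (e.symm ⟨t, h⟩) : ℕ → S) t := by
      simp only [hbase_def]
      rw [dif_pos h]
    rw [hb, Line.apply_none l x _ hnone]
  -- on fixed coordinates, base (l x) does not depend on x
  have hfix : ∀ (x y : αt) (t : ℕ), t ∈ R → base (l x) t = base (l y) t := by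
    intro x y t ht
    obtain ⟨htr, htH⟩ := Finset.mem_sdiff.mp ht
    have h : t < n := Finset.mem_range.mp htr
    have hne : l.idxFun (e.symm ⟨t, h⟩) ≠ none := fun hc => htH ((hH₀mem t h).mpr hc)
    obtain ⟨av, hav⟩ := Option.ne_none_iff_exists'.mp hne
    have hbx : base (l x) t = ((l x) (e.symm ⟨t, h⟩) : ℕ → S) t := by
      simp only [hbase_def]
      rw [dif_pos h]
    have hby : base (l y) t = ((l y) (e.symm ⟨t, h⟩) : ℕ → S) t := by
      simp only [hbase_def]
      rw [dif_pos h]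
    rw [hbx, hby, Line.apply_some hav, Line.apply_some hav]
  have hvalsplit : ∀ x : αt, (R = ∅ ∧ val (l x) = fSum H₀ x.1) ∨
      (R.Nonempty ∧ val (l x) = fSum H₀ x.1 + fSum R (base (l (Classical.arbitrary αt)))) := by
    intro x
    rcases R.eq_empty_or_nonempty with hR | hR
    · refine Or.inl ⟨hR, ?_⟩
      have : val (l x) = fSum H₀ (base (l x)) := by
        simp only [hval_def]
        rw [← hsplit, hR, Finset.union_empty]
      rw [this]
      exact fSum_congr hH₀ne (hvar x)
    · right
      refine ⟨hR, ?_⟩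
      have : val (l x) = fSum (H₀ ∪ R) (base (l x)) := by rw [hsplit]
      rw [this, fSum_union hdisj hH₀ne hR]
      congr 1
      · exact fSum_congr hH₀ne (hvar x)
      · exact fSum_congr hR fun t ht => hfix x _ t ht
  rcases R.eq_empty_or_nonempty with hRe | hRne
  · refine ⟨(t₀ : S) + x₁, H₀, hH₀ne, fun f hf => ?_⟩
    have hx := hline ⟨f, hf⟩
    have hv := hvalsplit ⟨f, hf⟩
    rcases hv with ⟨_, hv⟩ | ⟨hRne', _⟩
    · rw [hv] at hx
      have : (t₀ : S) + x₁ + fSum H₀ f = (t₀ : S) + (fSum H₀ f + x₁) := by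
        simp only [add_assoc, add_comm, add_left_comm]
      rw [this]
      exact hx
    · exact absurd hRe hRne'.ne_empty
  · refine ⟨(t₀ : S) + x₁ + fSum R (base (l (Classical.arbitrary αt))), H₀, hH₀ne, fun f hf => ?_⟩
    have hx := hline ⟨f, hf⟩
    have hv := hvalsplit ⟨f, hf⟩
    rcases hv with ⟨hRe, _⟩ | ⟨_, hv⟩
    · exact absurd hRe hRne.ne_empty
    · rw [hv] at hx
      have : (t₀ : S) + x₁ + fSum R (base (l (Classical.arbitrary αt))) + fSum H₀ f
          = (t₀ : S) + (fSum H₀ f + fSum R (base (l (Classical.arbitrary αt))) + x₁) := by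
        simp only [add_assoc, add_comm, add_left_comm]
      rw [this]
      exact hx

theorem jsetAdd_bounded {A : Set S} (hA : JSetAdd A) (F : Finset (ℕ → S)) (hF : F.Nonempty)
    (n : ℕ) : ∃ a H, H.Nonempty ∧ (∀ t ∈ H, n ≤ t) ∧ ∀ f ∈ F, a + fSum H f ∈ A := by
  classical
  obtain ⟨a, H, hH, hmem⟩ := hA (F.image fun f => (fun t => f (t + n))) (hF.image _)
  refine ⟨a, H.image (· + n), hH.image _, ?_, ?_⟩
  · intro t ht
    obtain ⟨s, _, rfl⟩ := Finset.mem_image.mp ht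
    omega
  · intro f hf
    rw [fSum_image_shift hH n f]
    exact hmem _ (Finset.mem_image_of_mem _ hf)

end SCST2
namespace SCST4
open SCST SCST2

attribute [local instance] Ultrafilter.add Ultrafilter.addSemigroup

variable {S : Type*} [AddCommSemigroup S]

theorem mem_add_uf {B : Set S} {U V : Ultrafilter S} :
    B ∈ U + V ↔ {x : S | {y : S | x + y ∈ B} ∈ V} ∈ U := by
  have h := Ultrafilter.eventually_add U V (· ∈ B)
  simpa only [Filter.eventually_iff, Ultrafilter.mem_coe, Set.setOf_mem_eq] using h

/-- The star set `A⋆` of a set `A` with respect to an ultrafilter `p`. -/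
def starSet (p : Ultrafilter S) (A : Set S) : Set S :=
  {x | x ∈ A ∧ {y : S | x + y ∈ A} ∈ p}

theorem starSet_subset (p : Ultrafilter S) (A : Set S) : starSet p A ⊆ A := fun _ h => h.1

theorem starSet_mem {p : Ultrafilter S} (hp : p + p = p) {A : Set S} (hA : A ∈ p) :
    starSet p A ∈ p := by
  have h1 : A ∈ p + p := by rw [hp]; exact hA
  exact Filter.inter_mem hA (mem_add_uf.mp h1)

theorem starSet_shift {p : Ultrafilter S} (hp : p + p = p) {A : Set S}
    {x : S} (hx : x ∈ starSet p A) : {y : S | x + y ∈ starSet p A} ∈ p := by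
  obtain ⟨hxA, hxshift⟩ := hx
  have h2 : {y : S | {z : S | (x + y) + z ∈ A} ∈ p} ∈ p := by
    have h3 : {y : S | x + y ∈ A} ∈ p + p := by rw [hp]; exact hxshift
    have h4 := mem_add_uf.mp h3
    have h5 : {x_1 : S | {y : S | x_1 + y ∈ {y : S | x + y ∈ A}} ∈ p}
        = {y : S | {z : S | (x + y) + z ∈ A} ∈ p} := by
      ext y
      simp only [Set.mem_setOf_eq, add_assoc]
    rwa [h5] at h4
  apply Filter.mem_of_superset (Filter.inter_mem hxshift h2)
  rintro y ⟨hy1, hy2⟩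
  exact ⟨hy1, hy2⟩

theorem psAdd_pullback {B : Set S} (r : Ultrafilter S)
    (hD : PiecewiseSyndeticAdd {x : S | {y : S | x + y ∈ B} ∈ r}) :
    PiecewiseSyndeticAdd B := by
  obtain ⟨G, hG, hT⟩ := hD
  refine ⟨G, hG, fun E hE => ?_⟩
  obtain ⟨x, hx⟩ := hT E hE
  have hch : ∀ e ∈ E, ∃ t, t ∈ G ∧ {y : S | (t + (e + x)) + y ∈ B} ∈ r := by
    intro e he
    obtain ⟨t, htG, htD⟩ := hx e he
    exact ⟨t, htG, htD⟩
  choose! t ht hty using hch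
  have hQ : (⋂ e ∈ E, {y : S | (t e + (e + x)) + y ∈ B}) ∈ (r : Filter S) :=
    (Filter.biInter_finset_mem E).mpr hty
  obtain ⟨y, hy⟩ := Ultrafilter.nonempty_of_mem hQ
  refine ⟨x + y, fun e he => ?_⟩
  refine ⟨t e, ht e he, ?_⟩
  show t e + (e + (x + y)) ∈ B
  have heq : (t e + (e + x)) + y = t e + (e + (x + y)) := by simp only [add_assoc]
  rw [← heq]
  exact Set.mem_iInter₂.mp hy e he

theorem exists_good_ultrafilter {I : Type} (CN : I → Set S) (hne : Nonempty I)
    (hdir : ∀ N M, ∃ P, CN P ⊆ CN N ∧ CN P ⊆ CN M)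
    (hshift : ∀ N, ∀ y ∈ CN N, ∃ M, CN M ⊆ {s : S | y + s ∈ CN N})
    (hps : ∀ N, PiecewiseSyndeticAdd (CN N)) :
    ∃ p : Ultrafilter S, p + p = p ∧ (∀ N, CN N ∈ p) ∧
      ∀ B : Set S, B ∈ p → PiecewiseSyndeticAdd B := by
  classical
  set 𝒮 : Set (Set S) :=
    Set.range CN ∪ {X | ∃ A : Set S, ¬PiecewiseSyndeticAdd A ∧ X = Aᶜ} with h𝒮
  have hFIP : ∀ T : Finset (Set S), ↑T ⊆ 𝒮 →
      ∃ N, ∃ B : Set S, ¬PiecewiseSyndeticAdd B ∧ CN N ∩ Bᶜ ⊆ ⋂₀ (↑T : Set (Set S)) := by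
    intro T
    induction T using Finset.induction with
    | empty =>
        intro _
        refine ⟨Classical.arbitrary I, ∅, ?_, ?_⟩
        · intro h
          exact Set.not_nonempty_empty (psAdd_nonempty h)
        · simp
    | insert X T hX ih =>
        intro hsub
        have hTsub : (↑T : Set (Set S)) ⊆ 𝒮 := by
          intro Y hY
          exact hsub (by simpa using Or.inr hY)
        obtain ⟨N, B, hB, hsub'⟩ := ih hTsub
        have hXmem : X ∈ 𝒮 := hsub (by simp)
        rcases hXmem with ⟨M, rfl⟩ | ⟨A, hA, rfl⟩
        · obtain ⟨P, hP1, hP2⟩ := hdir N M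
          refine ⟨P, B, hB, ?_⟩
          rw [Finset.coe_insert, Set.sInter_insert]
          exact Set.subset_inter (fun x hx => hP2 hx.1)
            (fun x hx => hsub' ⟨hP1 hx.1, hx.2⟩)
        · refine ⟨N, B ∪ A, ?_, ?_⟩
          · intro h
            rcases psAdd_union h with h' | h'
            · exact hB h'
            · exact hA h'
          · rw [Finset.coe_insert, Set.sInter_insert, Set.compl_union]
            exact Set.subset_inter (fun x hx => hx.2.2)
              (fun x hx => hsub' ⟨hx.1, hx.2.1⟩)
  have hFIPne : ∀ T : Finset (Set S), (↑T : Set (Set S)) ⊆ 𝒮 →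
      (⋂₀ (↑T : Set (Set S))).Nonempty := by
    intro T hT
    obtain ⟨N, B, hB, hsub'⟩ := hFIP T hT
    have hNB : (CN N ∩ Bᶜ).Nonempty := by
      by_contra h
      rw [Set.not_nonempty_iff_eq_empty] at h
      apply hB
      apply psAdd_mono _ (hps N)
      intro x hx
      by_contra hxB
      exact Set.eq_empty_iff_forall_notMem.mp h x ⟨hx, hxB⟩
    exact hNB.mono hsub'
  obtain ⟨u, hu⟩ := Ultrafilter.exists_ultrafilter_of_finite_inter_nonempty 𝒮 hFIPne
  have hu1 : ∀ N, CN N ∈ u := fun N => hu (Or.inl ⟨N, rfl⟩)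
  have hu2 : ∀ B : Set S, B ∈ u → PiecewiseSyndeticAdd B := by
    intro B hB
    by_contra h
    have hBc : Bᶜ ∈ u := hu (Or.inr ⟨B, h, rfl⟩)
    exact (Ultrafilter.compl_mem_iff_notMem.mp hBc) hB
  set Sig : Set (Ultrafilter S) :=
    {q | (∀ N, CN N ∈ q) ∧ ∀ B : Set S, B ∈ q → PiecewiseSyndeticAdd B} with hSg
  have hSgne : Sig.Nonempty := ⟨u, hu1, hu2⟩
  have hSgclosed : IsClosed Sig := by
    have hEq : Sig = (⋂ N, {q : Ultrafilter S | CN N ∈ q}) ∩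
        ⋂ A : {A : Set S // ¬PiecewiseSyndeticAdd A},
          {q : Ultrafilter S | (A : Set S)ᶜ ∈ q} := by
      ext q
      constructor
      · rintro ⟨h1, h2⟩
        refine ⟨Set.mem_iInter.mpr h1, Set.mem_iInter.mpr ?_⟩
        rintro ⟨A, hA⟩
        exact Ultrafilter.compl_mem_iff_notMem.mpr fun hq => hA (h2 A hq)
      · rintro ⟨h1, h2⟩
        refine ⟨Set.mem_iInter.mp h1, fun B hB => ?_⟩
        by_contra hB'
        have := Set.mem_iInter.mp h2 ⟨B, hB'⟩
        exact (Ultrafilter.compl_mem_iff_notMem.mp this) hB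
    rw [hEq]
    exact IsClosed.inter (isClosed_iInter fun N => ultrafilter_isClosed_basic _)
      (isClosed_iInter fun A => ultrafilter_isClosed_basic _)
  have hSgadd : ∀ q ∈ Sig, ∀ r ∈ Sig, q + r ∈ Sig := by
    rintro q ⟨hq1, hq2⟩ r ⟨hr1, hr2⟩
    constructor
    · intro N
      rw [mem_add_uf]
      apply Filter.mem_of_superset (hq1 N)
      intro x hx
      obtain ⟨M, hM⟩ := hshift N x hx
      exact Filter.mem_of_superset (hr1 M) hM
    · intro B hB
      rw [mem_add_uf] at hB
      exact psAdd_pullback r (hq2 _ hB)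
  obtain ⟨p, hpSg, hpp⟩ := exists_idempotent_in_compact_add_subsemigroup
    (fun r : Ultrafilter S => Ultrafilter.continuous_add_left r) Sig hSgne
    (hSgclosed.isCompact) hSgadd
  exact ⟨p, hpp, hpSg.1, hpSg.2⟩

end SCST4
namespace SCST5
open SCST SCST2 SCST4

variable {S : Type*} [AddCommSemigroup S]

theorem seqSum_zero (v : ℕ → S) : seqSum v 0 = v 0 := rfl

theorem seqSum_succ (v : ℕ → S) (r : ℕ) : seqSum v (r + 1) = seqSum v r + v (r + 1) := by
  simp [seqSum, List.range_succ]

open scoped Classical in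
/-- All "partial chain sums" whose top is a proper subset of `F`. -/
noncomputable def Kof {S : Type*} [AddCommSemigroup S] (F : Finset (ℕ → S))
    (rec : ∀ G : Finset (ℕ → S), G ⊂ F → S × Finset ℕ × Finset S) : Finset S :=
  F.ssubsets.attach.biUnion fun G => (rec G.1 (Finset.mem_ssubsets.mp G.2)).2.2

/-- The inductive condition that the value at `F` must satisfy. -/
def Pof (Cs : Set S) (F : Finset (ℕ → S))
    (rec : ∀ G : Finset (ℕ → S), G ⊂ F → S × Finset ℕ × Finset S) : Prop :=
  ∃ aH : S × Finset ℕ, aH.2.Nonempty ∧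
    (∀ (G : Finset (ℕ → S)) (h : G ⊂ F), G.Nonempty →
      ∀ s ∈ (rec G h).2.1, ∀ u ∈ aH.2, s < u) ∧
    ∀ f ∈ F, (aH.1 + fSum aH.2 f ∈ Cs) ∧
      ∀ d ∈ Kof F rec, d + (aH.1 + fSum aH.2 f) ∈ Cs

open scoped Classical in
noncomputable def aHof (Cs : Set S) (s₀ : S) (F : Finset (ℕ → S))
    (rec : ∀ G : Finset (ℕ → S), G ⊂ F → S × Finset ℕ × Finset S) : S × Finset ℕ :=
  if h : Pof Cs F rec then h.choose else (s₀, {0})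

open scoped Classical in
noncomputable def PhiAux (Cs : Set S) (s₀ : S) (F : Finset (ℕ → S))
    (rec : ∀ G : Finset (ℕ → S), G ⊂ F → S × Finset ℕ × Finset S) :
    S × Finset ℕ × Finset S :=
  ((aHof Cs s₀ F rec).1, (aHof Cs s₀ F rec).2,
    F.image (fun f => (aHof Cs s₀ F rec).1 + fSum (aHof Cs s₀ F rec).2 f) ∪
      (Kof F rec ×ˢ F).image fun q =>
        q.1 + ((aHof Cs s₀ F rec).1 + fSum (aHof Cs s₀ F rec).2 q.2))

noncomputable def Phi (Cs : Set S) (s₀ : S) : Finset (ℕ → S) → S × Finset ℕ × Finset S :=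
  Finset.strongInduction (PhiAux Cs s₀)

theorem Phi_eq (Cs : Set S) (s₀ : S) (F : Finset (ℕ → S)) :
    Phi Cs s₀ F = PhiAux Cs s₀ F fun G _ => Phi Cs s₀ G :=
  Finset.strongInduction_eq (PhiAux Cs s₀) F

theorem Phi_L_mem1 (Cs : Set S) (s₀ : S) {F : Finset (ℕ → S)} {f : ℕ → S} (hf : f ∈ F) :
    (Phi Cs s₀ F).1 + fSum (Phi Cs s₀ F).2.1 f ∈ (Phi Cs s₀ F).2.2 := by
  classical
  rw [Phi_eq]
  exact Finset.mem_union_left _ (Finset.mem_image_of_mem _ hf)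

theorem Phi_L_mem2 (Cs : Set S) (s₀ : S) {F G : Finset (ℕ → S)} {f : ℕ → S} {d : S}
    (hGF : G ⊂ F) (hd : d ∈ (Phi Cs s₀ G).2.2) (hf : f ∈ F) :
    d + ((Phi Cs s₀ F).1 + fSum (Phi Cs s₀ F).2.1 f) ∈ (Phi Cs s₀ F).2.2 := by
  classical
  rw [Phi_eq Cs s₀ F]
  apply Finset.mem_union_right
  apply Finset.mem_image.mpr
  refine ⟨(d, f), Finset.mem_product.mpr ⟨?_, hf⟩, rfl⟩
  apply Finset.mem_biUnion.mpr
  exact ⟨⟨G, Finset.mem_ssubsets.mpr hGF⟩, Finset.mem_attach _ _, hd⟩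

theorem chain_mem (Cs : Set S) (s₀ : S) (r : ℕ) (g : ℕ → Finset (ℕ → S)) (f : ℕ → ℕ → S)
    (hchain : ∀ i j : ℕ, i < j → j ≤ r → g i ⊂ g j) (hf : ∀ i ≤ r, f i ∈ g i) :
    seqSum (fun i => (Phi Cs s₀ (g i)).1 + fSum (Phi Cs s₀ (g i)).2.1 (f i)) r
      ∈ (Phi Cs s₀ (g r)).2.2 := by
  induction r with
  | zero =>
      rw [seqSum_zero]
      exact Phi_L_mem1 Cs s₀ (hf 0 le_rfl)
  | succ r ih =>
      rw [seqSum_succ]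
      exact Phi_L_mem2 Cs s₀ (hchain r (r + 1) (Nat.lt_succ_self r) le_rfl)
        (ih (fun i j hij hjr => hchain i j hij (hjr.trans (Nat.le_succ r)))
          (fun i hir => hf i (hir.trans (Nat.le_succ r))))
        (hf (r + 1) le_rfl)

theorem Phi_good (Cs : Set S) (s₀ : S) (p : Ultrafilter S) (hCs : Cs ∈ p)
    (hshift : ∀ x ∈ Cs, {y : S | x + y ∈ Cs} ∈ p)
    (hJ : ∀ B : Set S, B ∈ p → JSetAdd B) (F : Finset (ℕ → S)) :
    (∀ d ∈ (Phi Cs s₀ F).2.2, d ∈ Cs) ∧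
    (F.Nonempty → ((Phi Cs s₀ F).2.1.Nonempty ∧
      ∀ (G : Finset (ℕ → S)), G ⊂ F → G.Nonempty →
        ∀ s ∈ (Phi Cs s₀ G).2.1, ∀ u ∈ (Phi Cs s₀ F).2.1, s < u)) := by
  induction F using Finset.strongInduction with
  | _ F ih =>
  classical
  have hKCs : ∀ d ∈ Kof F (fun G _ => Phi Cs s₀ G), d ∈ Cs := by
    intro d hd
    rw [Kof] at hd
    obtain ⟨G, -, hdG⟩ := Finset.mem_biUnion.mp hd
    exact (ih G.1 (Finset.mem_ssubsets.mp G.2)).1 d hdG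
  have hP : Pof Cs F fun G _ => Phi Cs s₀ G := by
    rcases F.eq_empty_or_nonempty with rfl | hFne
    · refine ⟨(s₀, {0}), ⟨0, Finset.mem_singleton_self 0⟩, ?_, ?_⟩
      · intro G hG
        exact absurd hG (Finset.not_ssubset_empty G)
      · intro f hf
        exact absurd hf (Finset.notMem_empty f)
    · have hB : ({x | x ∈ Cs ∧
          ∀ d ∈ Kof F (fun G _ => Phi Cs s₀ G), d + x ∈ Cs} : Set S) ∈ p := by
        have h1 : (⋂ d ∈ Kof F (fun G _ => Phi Cs s₀ G), {x : S | d + x ∈ Cs})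
            ∈ (p : Filter S) :=
          (Filter.biInter_finset_mem _).mpr fun d hd => hshift d (hKCs d hd)
        apply Filter.mem_of_superset (Filter.inter_mem hCs h1)
        rintro x ⟨hx1, hx2⟩
        exact ⟨hx1, fun d hd => Set.mem_iInter₂.mp hx2 d hd⟩
      obtain ⟨a, H, hHne, hHbd, hmem⟩ := jsetAdd_bounded (hJ _ hB) F hFne
        (((F.ssubsets.attach.biUnion fun G => (Phi Cs s₀ G.1).2.1).sup id) + 1)
      refine ⟨(a, H), hHne, ?_, ?_⟩
      · intro G hG hGne s hs u hu
        have h1 : s ≤ (F.ssubsets.attach.biUnion fun G => (Phi Cs s₀ G.1).2.1).sup id :=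
          Finset.le_sup (f := id) (Finset.mem_biUnion.mpr
            ⟨⟨G, Finset.mem_ssubsets.mpr hG⟩, Finset.mem_attach _ _, hs⟩)
        have h2 := hHbd u hu
        omega
      · intro f hf
        exact hmem f hf
  have haH : aHof Cs s₀ F (fun G _ => Phi Cs s₀ G) = hP.choose := by
    rw [aHof, dif_pos hP]
  have hspec := hP.choose_spec
  refine ⟨?_, fun hFne => ⟨?_, ?_⟩⟩
  · intro d hd
    rw [Phi_eq] at hd
    rcases Finset.mem_union.mp hd with hd' | hd'
    · obtain ⟨f, hf, rfl⟩ := Finset.mem_image.mp hd'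
      rw [haH]
      exact (hspec.2.2 f hf).1
    · obtain ⟨⟨dk, f⟩, hmem2, rfl⟩ := Finset.mem_image.mp hd'
      obtain ⟨hdk, hf⟩ := Finset.mem_product.mp hmem2
      rw [haH]
      exact (hspec.2.2 f hf).2 dk hdk
  · rw [Phi_eq]
    show (aHof Cs s₀ F fun G _ => Phi Cs s₀ G).2.Nonempty
    rw [haH]
    exact hspec.1
  · intro G hGF hGne s hs u hu
    rw [Phi_eq] at hu
    have hu' : u ∈ hP.choose.2 := by
      rw [← haH]
      exact hu
    exact hspec.2.1 G hGF hGne s hs u hu'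

end SCST5

/-- the stronger Central Sets Theorem for commutative semigroups.
Chains `G₁ ⊊ ⋯ ⊊ G_{r+1}` are coded by `g : ℕ → Finset (ℕ → S)` restricted to
indices `≤ r`. -/
theorem strongerCentralSetsTheorem_comm {S : Type*} [AddCommSemigroup S]
    (C : Set S) (hC : CentralAdd C) :
    ∃ (α : Finset (ℕ → S) → S) (H : Finset (ℕ → S) → Finset ℕ),
      (∀ F : Finset (ℕ → S), F.Nonempty → (H F).Nonempty) ∧
      (∀ F G : Finset (ℕ → S), F.Nonempty → F ⊂ G →
        ∀ s ∈ H F, ∀ u ∈ H G, s < u) ∧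
      (∀ (r : ℕ) (g : ℕ → Finset (ℕ → S)) (f : ℕ → ℕ → S),
        (g 0).Nonempty → (∀ i j : ℕ, i < j → j ≤ r → g i ⊂ g j) →
        (∀ i : ℕ, i ≤ r → f i ∈ g i) →
        seqSum (fun i => α (g i) + fSum (H (g i)) (f i)) r ∈ C) := by
  classical
  obtain ⟨I, CN, hne, hsubC, hdir, hshift, hcps⟩ := hC
  obtain ⟨G0, x0, hcx⟩ := hcps
  set s₀ : S := x0 ∅ ∅ with hs₀
  have hps : ∀ N, PiecewiseSyndeticAdd (CN N) := by
    intro N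
    have hsubA : (↑({CN N} : Finset (Set S)) : Set (Set S)) ⊆ {B | ∃ N', B = CN N'} := by
      intro B hB
      simp only [Finset.coe_singleton, Set.mem_singleton_iff] at hB
      exact ⟨N, hB⟩
    have hne1 : ({CN N} : Finset (Set S)).Nonempty := ⟨CN N, Finset.mem_singleton_self _⟩
    obtain ⟨t0, ht0, -⟩ := hcx {s₀} {CN N} {CN N} hne1 hsubA (Finset.Subset.refl _) s₀
      (Finset.mem_singleton_self s₀)
    refine ⟨G0 {CN N}, ⟨t0, ht0⟩, ?_⟩
    intro E hEne
    refine ⟨x0 {CN N} E, fun e he => ?_⟩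
    obtain ⟨t, htG, htmem⟩ := hcx E {CN N} {CN N} hne1 hsubA (Finset.Subset.refl _) e he
    refine ⟨t, htG, ?_⟩
    simpa using htmem
  obtain ⟨p, hpp, hpCN, hpPS⟩ := SCST4.exists_good_ultrafilter CN hne hdir hshift hps
  have hCp : C ∈ p := Filter.mem_of_superset (hpCN (Classical.arbitrary I)) (hsubC _)
  set Cs : Set S := SCST4.starSet p C with hCsdef
  have hCs : Cs ∈ p := SCST4.starSet_mem hpp hCp
  have hCsshift : ∀ x ∈ Cs, {y : S | x + y ∈ Cs} ∈ p := fun x hx => SCST4.starSet_shift hpp hx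
  have hJ : ∀ B : Set S, B ∈ p → JSetAdd B := fun B hB => SCST2.psAdd_jsetAdd (hpPS B hB)
  have hmaster := SCST5.Phi_good Cs s₀ p hCs hCsshift hJ
  refine ⟨fun F => (SCST5.Phi Cs s₀ F).1, fun F => (SCST5.Phi Cs s₀ F).2.1, ?_, ?_, ?_⟩
  · intro F hF
    exact ((hmaster F).2 hF).1
  · intro F G hF hFG s hs u hu
    have hGne : G.Nonempty := hF.mono hFG.subset
    exact ((hmaster G).2 hGne).2 F hFG hF s hs u hu
  · intro r g f _ hchain hf
    have hh := SCST5.chain_mem Cs s₀ r g f hchain hf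
    have hCsmem := (hmaster (g r)).1 _ hh
    exact SCST4.starSet_subset p C hCsmem
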